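/- Uniform Lipschitz estimate for the nonlinearity (Lemma 3.8): for every R > 0 there exists a constant L > 0, independent of δ, such that for every δ ∈ (0, κ₀/R], every t ∈ (0,δ], and all u, v ∈ Y with ‖u‖ ≤ R t² and ‖v‖ ≤ R t², one has ‖f(t,u) − f(t,v)‖ ≤ L‖u − v‖. -/

import Mathlib

noncomputable section

/-- `ℝ^d` as Euclidean space. -/
abbrev Euc (d : ℕ) : Type := EuclideanSpace ℝ (Fin d)

/-- Generalized binomial coefficient `binom(α,k) = (∏_{i=0}^{k−1}(α−i))/k!`. -/
noncomputable def rbinom (α : ℝ) (k : ℕ) : ℝ :=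
  (∏ i ∈ Finset.range k, (α - i)) / (Nat.factorial k : ℝ)

/-- The singular nonlinearity `f(t,u)`, defined pointwise by
`f(t,u)(y) = t a(y) + t^p λ(y) − (η(y)/β) Σ_{k≥2} binom(β+1,k)(u(y)/(tη(y)))^k`
`+ θ[t^p γ(y)(tη(y)+u(y))/((t^p γ(y))^β + |tη(y)+u(y)|^β)^{1/β} − (tη(y)+u(y))]`,
with `β = 1/(p−1)` and `1/β = p−1`; by Lean's conventions quotients with vanishing
denominator are read as `0`. -/
noncomputable def fNL {d : ℕ} (p θ : ℝ) (η γ lam a : Euc d → ℝ)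
    (t : ℝ) (u : Euc d → ℝ) (y : Euc d) : ℝ :=
  t * a y + t ^ p * lam y
    - (η y / (1 / (p - 1))) *
        ∑' k : ℕ, rbinom (1 / (p - 1) + 1) (k + 2) * (u y / (t * η y)) ^ (k + 2)
    + θ * (t ^ p * γ y * (t * η y + u y) /
          ((t ^ p * γ y) ^ (1 / (p - 1)) + |t * η y + u y| ^ (1 / (p - 1))) ^ (p - 1)
        - (t * η y + u y))

section Helpers

lemma rbinom_succ (α : ℝ) (n : ℕ) :
    rbinom α (n+1) = rbinom α n * ((α - n) / (n+1)) := by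
  unfold rbinom
  rw [Finset.prod_range_succ, Nat.factorial_succ]
  push_cast
  rw [div_mul_div_comm, mul_comm ((n:ℝ)+1)]

lemma rbinom_succ_mul (α : ℝ) (n : ℕ) :
    ((n:ℝ)+1) * rbinom α (n+1) = α * rbinom (α - 1) n := by
  unfold rbinom
  rw [Finset.prod_range_succ', Nat.factorial_succ]
  have h3 : ∀ i ∈ Finset.range n, (α - ((i+1 : ℕ) : ℝ)) = (α - 1 - i) := by
    intro i _; push_cast; ring
  rw [Finset.prod_congr rfl h3]
  have h2 : ((n:ℝ)+1) ≠ 0 := by positivity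
  push_cast
  rw [mul_div_assoc', mul_comm ((n:ℝ)+1), mul_div_assoc, div_mul_eq_div_div,
    div_self h2]
  ring

lemma summable_abs_rbinom {β : ℝ} (hβ : 0 < β) : Summable fun n => |rbinom β n| := by
  set K : ℕ := ⌈β⌉₊ + 1 with hKdef
  have hKβ : β < K := by
    have := Nat.le_ceil β
    push_cast [hKdef]
    linarith
  set F : ℕ → ℝ := fun n => (n : ℝ) * |rbinom β n| with hF
  have key : ∀ n, K ≤ n → β * |rbinom β n| = F n - F (n+1) := by
    intro n hn
    have hnβ : β ≤ (n : ℝ) := le_trans hKβ.le (by exact_mod_cast hn)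
    have h2 : ((n:ℝ)+1) ≠ 0 := by positivity
    simp only [hF]
    rw [rbinom_succ, abs_mul, abs_div]
    rw [abs_sub_comm, abs_of_nonneg (by linarith : (0:ℝ) ≤ (n:ℝ) - β),
      abs_of_nonneg (by positivity : (0:ℝ) ≤ (n:ℝ)+1)]
    push_cast
    field_simp
    ring
  have hsub : Summable fun i => |rbinom β (K + i)| := by
    apply summable_of_sum_range_le (c := F K / β)
    · intro n; positivity
    · intro N
      have tel : ∑ i ∈ Finset.range N, (F (K+i) - F (K+i+1)) = F K - F (K+N) :=
        Finset.sum_range_sub' (fun i => F (K+i)) N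
      have hle : β * ∑ i ∈ Finset.range N, |rbinom β (K + i)| ≤ F K := by
        rw [Finset.mul_sum]
        calc ∑ i ∈ Finset.range N, β * |rbinom β (K + i)|
            = ∑ i ∈ Finset.range N, (F (K+i) - F (K+i+1)) := by
              refine Finset.sum_congr rfl fun i _ => ?_
              exact key (K+i) (Nat.le_add_right K i)
          _ = F K - F (K+N) := tel
          _ ≤ F K := by
              have : 0 ≤ F (K+N) := by positivity
              linarith
      rw [le_div_iff₀ hβ]
      linarith [hle]
  have hsub' : Summable fun i => |rbinom β (i + K)| := by
    simpa [add_comm] using hsub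
  exact (summable_nat_add_iff K).mp hsub'

lemma abs_pow_sub_pow_le' {s r m : ℝ} (hs : |s| ≤ m) (hr : |r| ≤ m) (n : ℕ) :
    |s ^ (n+2) - r ^ (n+2)| ≤ ((n:ℝ)+2) * m ^ (n+1) * |s - r| := by
  have hm0 : 0 ≤ m := le_trans (abs_nonneg s) hs
  rw [← geom_sum₂_mul s r (n+2), abs_mul]
  have hsum : |∑ i ∈ Finset.range (n+2), s ^ i * r ^ (n+2-1-i)| ≤ ((n:ℝ)+2) * m ^ (n+1) := by
    calc |∑ i ∈ Finset.range (n+2), s ^ i * r ^ (n+2-1-i)|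
        ≤ ∑ i ∈ Finset.range (n+2), |s ^ i * r ^ (n+2-1-i)| :=
          Finset.abs_sum_le_sum_abs _ _
      _ ≤ ∑ _i ∈ Finset.range (n+2), m ^ (n+1) := by
          refine Finset.sum_le_sum fun i hi => ?_
          have hi' : i ≤ n + 1 := by
            have := Finset.mem_range.mp hi; omega
          calc |s ^ i * r ^ (n+2-1-i)| = |s| ^ i * |r| ^ (n+2-1-i) := by
                rw [abs_mul, abs_pow, abs_pow]
            _ ≤ m ^ i * m ^ (n+2-1-i) :=
                mul_le_mul (pow_le_pow_left₀ (abs_nonneg _) hs i)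
                  (pow_le_pow_left₀ (abs_nonneg _) hr _) (by positivity) (by positivity)
            _ = m ^ (n+1) := by rw [← pow_add]; congr 1; omega
      _ = ((n:ℝ)+2) * m ^ (n+1) := by
          rw [Finset.sum_const, Finset.card_range, nsmul_eq_mul]
          push_cast; ring
  exact mul_le_mul_of_nonneg_right hsum (abs_nonneg _)

lemma tsum_pow_diff_le (c : ℕ → ℝ) (hc : Summable (fun k : ℕ => ((k:ℝ)+2) * |c k|))
    {m s r : ℝ} (hm : m ≤ 1) (hs : |s| ≤ m) (hr : |r| ≤ m) :
    |(∑' k : ℕ, c k * s ^ (k+2)) - ∑' k : ℕ, c k * r ^ (k+2)| ≤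
      (∑' k : ℕ, ((k:ℝ)+2) * |c k|) * (m * |s - r|) := by
  have hm0 : 0 ≤ m := le_trans (abs_nonneg s) hs
  have habs : ∀ (x : ℝ), |x| ≤ m → Summable fun k : ℕ => c k * x ^ (k+2) := by
    intro x hx
    apply Summable.of_abs
    apply Summable.of_nonneg_of_le (fun k => abs_nonneg _) (fun k => ?_) hc
    rw [abs_mul, abs_pow]
    calc |c k| * |x| ^ (k+2) ≤ |c k| * 1 := by
          refine mul_le_mul_of_nonneg_left ?_ (abs_nonneg _)
          exact pow_le_one₀ (abs_nonneg x) (hx.trans hm)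
      _ ≤ ((k:ℝ)+2) * |c k| := by nlinarith [abs_nonneg (c k)]
  have hsu := habs s hs
  have hsv := habs r hr
  rw [← Summable.tsum_sub hsu hsv]
  have h1 : |∑' k : ℕ, (c k * s ^ (k+2) - c k * r ^ (k+2))| ≤
      ∑' k : ℕ, |c k * s ^ (k+2) - c k * r ^ (k+2)| := by
    have := norm_tsum_le_tsum_norm (f := fun k : ℕ => c k * s ^ (k+2) - c k * r ^ (k+2)) ?_
    · simpa [Real.norm_eq_abs] using this
    · simpa [Real.norm_eq_abs] using (hsu.sub hsv).abs
  refine h1.trans ?_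
  have h2 : ∀ k : ℕ, |c k * s ^ (k+2) - c k * r ^ (k+2)| ≤
      (((k:ℝ)+2) * |c k|) * (m * |s - r|) := by
    intro k
    rw [← mul_sub, abs_mul]
    calc |c k| * |s ^ (k+2) - r ^ (k+2)| ≤ |c k| * (((k:ℝ)+2) * m ^ (k+1) * |s - r|) :=
          mul_le_mul_of_nonneg_left (abs_pow_sub_pow_le' hs hr k) (abs_nonneg _)
      _ ≤ |c k| * (((k:ℝ)+2) * m * |s - r|) := by
          refine mul_le_mul_of_nonneg_left ?_ (abs_nonneg _)
          have hmm : m ^ (k+1) ≤ m := by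
            calc m ^ (k+1) ≤ m ^ 1 := pow_le_pow_of_le_one hm0 hm (by omega)
              _ = m := pow_one m
          have hk2 : (0:ℝ) ≤ (k:ℝ)+2 := by positivity
          exact mul_le_mul_of_nonneg_right (mul_le_mul_of_nonneg_left hmm hk2) (abs_nonneg _)
      _ = (((k:ℝ)+2) * |c k|) * (m * |s - r|) := by ring
  calc ∑' k : ℕ, |c k * s ^ (k+2) - c k * r ^ (k+2)|
      ≤ ∑' k : ℕ, (((k:ℝ)+2) * |c k|) * (m * |s - r|) := by
        refine Summable.tsum_le_tsum h2 ((hsu.sub hsv).abs) ?_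
        exact hc.mul_right _
    _ = (∑' k : ℕ, ((k:ℝ)+2) * |c k|) * (m * |s - r|) := tsum_mul_right

lemma glip {B q : ℝ} (hB : 0 < B) (hq : 0 < q) (hqB : q * B = 1) {A : ℝ} (hA : 0 ≤ A)
    (x y : ℝ) :
    |A * x / ((A ^ B + |x| ^ B) ^ q) - A * y / ((A ^ B + |y| ^ B) ^ q)| ≤ |x - y| := by
  rcases eq_or_lt_of_le hA with hA0 | hApos
  · simp [← hA0]
  set D : ℝ → ℝ := fun z => (A ^ B + |z| ^ B) ^ q with hD
  set G : ℝ → ℝ := fun z => A * z / D z with hG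
  have hbase : ∀ z : ℝ, 0 < A ^ B + |z| ^ B := fun z =>
    lt_add_of_lt_of_nonneg (Real.rpow_pos_of_pos hApos B) (Real.rpow_nonneg (abs_nonneg z) B)
  have hDpos : ∀ z : ℝ, 0 < D z := fun z => Real.rpow_pos_of_pos (hbase z) q
  have hDB : ∀ z : ℝ, (D z) ^ B = A ^ B + |z| ^ B := by
    intro z
    rw [hD, ← Real.rpow_mul (hbase z).le, hqB, Real.rpow_one]
  have hAD : ∀ z : ℝ, A ≤ D z := by
    intro z
    rw [← Real.rpow_le_rpow_iff hA (hDpos z).le hB, hDB]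
    exact le_add_of_nonneg_right (Real.rpow_nonneg (abs_nonneg z) B)
  have hDmono : ∀ z w : ℝ, |z| ≤ |w| → D z ≤ D w := by
    intro z w h
    exact Real.rpow_le_rpow (hbase z).le
      (add_le_add le_rfl (Real.rpow_le_rpow (abs_nonneg z) h hB.le)) hq.le
  have hDeven : ∀ z : ℝ, D (-z) = D z := by intro z; simp [hD]
  have hGodd : ∀ z : ℝ, G (-z) = -G z := by
    intro z; simp only [hG, hDeven, mul_neg, neg_div]
  have hG0 : G 0 = 0 := by simp [hG]
  have hGmono0 : ∀ z w : ℝ, 0 ≤ z → z ≤ w → G z ≤ G w := by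
    intro z w hz hzw
    have hw : 0 ≤ w := hz.trans hzw
    rw [hG]
    rw [div_le_div_iff₀ (hDpos z) (hDpos w)]
    have key : z * D w ≤ w * D z := by
      rw [← Real.rpow_le_rpow_iff (by positivity) (by positivity) hB,
        Real.mul_rpow hz (hDpos w).le, Real.mul_rpow hw (hDpos z).le, hDB, hDB,
        abs_of_nonneg hz, abs_of_nonneg hw]
      have hzB : z ^ B ≤ w ^ B := Real.rpow_le_rpow hz hzw hB.le
      have h1 : z ^ B * A ^ B ≤ w ^ B * A ^ B :=
        mul_le_mul_of_nonneg_right hzB (Real.rpow_nonneg hA B)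
      nlinarith [Real.rpow_nonneg hz B, Real.rpow_nonneg hw B]
    calc A * z * D w = A * (z * D w) := by ring
      _ ≤ A * (w * D z) := mul_le_mul_of_nonneg_left key hA
      _ = A * w * D z := by ring
  have hHmono0 : ∀ z w : ℝ, 0 ≤ z → z ≤ w → z - G z ≤ w - G w := by
    intro z w hz hzw
    have hw : 0 ≤ w := hz.trans hzw
    have hfact : ∀ v : ℝ, v - G v = v * (1 - A / D v) := by
      intro v
      rw [hG]
      field_simp [(hDpos v).ne']
    rw [hfact z, hfact w]
    have h1 : A / D w ≤ A / D z :=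
      div_le_div_of_nonneg_left hA (hDpos z) (hDmono z w (by rw [abs_of_nonneg hz, abs_of_nonneg hw]; exact hzw))
    have h2 : 0 ≤ 1 - A / D z := by
      rw [sub_nonneg, div_le_one (hDpos z)]
      exact hAD z
    exact mul_le_mul hzw (by linarith) h2 hw
  have hGmono : ∀ z w : ℝ, z ≤ w → G z ≤ G w := by
    intro z w hzw
    rcases le_total 0 z with hz | hz
    · exact hGmono0 z w hz hzw
    rcases le_total w 0 with hw | hw
    · have := hGmono0 (-w) (-z) (by linarith) (by linarith)
      rw [hGodd, hGodd] at this
      linarith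
    · have h1 : G z ≤ 0 := by
        have := hGmono0 0 (-z) le_rfl (by linarith)
        rw [hG0, hGodd] at this
        linarith
      have h2 : 0 ≤ G w := by
        have := hGmono0 0 w le_rfl hw
        rw [hG0] at this
        linarith
      linarith
  have hHmono : ∀ z w : ℝ, z ≤ w → z - G z ≤ w - G w := by
    intro z w hzw
    rcases le_total 0 z with hz | hz
    · exact hHmono0 z w hz hzw
    rcases le_total w 0 with hw | hw
    · have := hHmono0 (-w) (-z) (by linarith) (by linarith)
      rw [hGodd, hGodd] at this
      linarith
    · have h1 : z - G z ≤ 0 := by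
        have := hHmono0 0 (-z) le_rfl (by linarith)
        rw [hG0, hGodd] at this
        linarith
      have h2 : 0 ≤ w - G w := by
        have := hHmono0 0 w le_rfl hw
        rw [hG0] at this
        linarith
      linarith
  show |G x - G y| ≤ |x - y|
  rcases le_total x y with h | h
  · have h1 : G x ≤ G y := hGmono x y h
    have h2 : G y - G x ≤ y - x := by have := hHmono x y h; linarith
    rw [abs_sub_comm, abs_of_nonneg (by linarith), abs_sub_comm, abs_of_nonneg (by linarith)]
    exact h2
  · have h1 : G y ≤ G x := hGmono y x h
    have h2 : G x - G y ≤ x - y := by have := hHmono y x h; linarith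
    rw [abs_of_nonneg (by linarith), abs_of_nonneg (by linarith)]
    exact h2

end Helpers

set_option maxHeartbeats 1000000 in
/-- Lemma 3.8: for every `R > 0` there is `L > 0`, independent of `δ`,
such that for every `δ ∈ (0, κ₀/R]`, every `t ∈ (0,δ]` and all `u, v ∈ Y` with
`‖u‖ ≤ R t²` and `‖v‖ ≤ R t²`, one has `‖f(t,u) − f(t,v)‖ ≤ L ‖u − v‖` (expressed via an
arbitrary uniform bound `c` on `|u − v|`). -/
theorem nonlinearity_uniform_lipschitz
    (d : ℕ) (hd : 1 ≤ d) (p θ κ₀ : ℝ) (hp : 1 < p) (hθ : 0 ≤ θ) (hκ₀ : 0 < κ₀)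
    (η γ lam a : Euc d → ℝ)
    (hηc : Continuous η) (hγc : Continuous γ) (hlamc : Continuous lam) (hac : Continuous a)
    (hηb : ∃ C, ∀ y, |η y| ≤ C) (hγb : ∃ C, ∀ y, |γ y| ≤ C)
    (hlamb : ∃ C, ∀ y, |lam y| ≤ C) (hab : ∃ C, ∀ y, |a y| ≤ C)
    (hηκ : ∀ y, κ₀ ≤ η y) (hγ0 : ∀ y, 0 ≤ γ y) (hlam0 : ∀ y, 0 ≤ lam y)
    (R : ℝ) (hR : 0 < R) :
    ∃ L > (0 : ℝ), ∀ δ : ℝ, 0 < δ → δ ≤ κ₀ / R → ∀ t ∈ Set.Ioc (0 : ℝ) δ,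
      ∀ u v : Euc d → ℝ, Continuous u → Continuous v →
        (∀ y, |u y| ≤ R * t ^ 2) → (∀ y, |v y| ≤ R * t ^ 2) →
        ∀ c : ℝ, (∀ y, |u y - v y| ≤ c) →
        ∀ y, |fNL p θ η γ lam a t u y - fNL p θ η γ lam a t v y| ≤ L * c := by
  obtain ⟨Cη, hCη⟩ := hηb
  have hp1 : 0 < p - 1 := by linarith
  have hβ : 0 < 1/(p-1) := by positivity
  have hck : ∀ k : ℕ, (1/(p-1)+1) * |rbinom (1/(p-1)) (k+1)| =
      ((k:ℝ)+2) * |rbinom (1/(p-1)+1) (k+2)| := by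
    intro k
    have h := rbinom_succ_mul (1/(p-1)+1) (k+1)
    rw [add_sub_cancel_right] at h
    have habs := congrArg abs h
    rw [abs_mul, abs_mul,
      abs_of_nonneg (by positivity : (0:ℝ) ≤ ((k+1:ℕ):ℝ)+1),
      abs_of_nonneg (by positivity : (0:ℝ) ≤ 1/(p-1)+1)] at habs
    push_cast at habs ⊢
    linarith [habs]
  have hT : Summable (fun k : ℕ => ((k:ℝ)+2) * |rbinom (1/(p-1)+1) (k+2)|) := by
    have h := (summable_abs_rbinom hβ).mul_left (1/(p-1)+1)
    have h2 : Summable (fun n : ℕ => (1/(p-1)+1) * |rbinom (1/(p-1)) (n+1)|) :=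
      (summable_nat_add_iff 1).mpr h
    exact h2.congr hck
  set T : ℝ := ∑' k : ℕ, ((k:ℝ)+2) * |rbinom (1/(p-1)+1) (k+2)| with hTdef
  have hT0 : 0 ≤ T := tsum_nonneg fun k => by positivity
  have hCη0 : 0 < Cη := lt_of_lt_of_le hκ₀ ((hηκ 0).trans ((le_abs_self _).trans (hCη 0)))
  refine ⟨Cη * (p-1) * T * R / κ₀^2 + 2*θ + 1, by positivity, ?_⟩
  intro δ hδ0 hδκ t ht u v hucont hvcont hubd hvbd c hc y
  have ht0 : 0 < t := ht.1
  have htδ : t ≤ δ := ht.2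
  have hc0 : 0 ≤ c := (abs_nonneg _).trans (hc y)
  have hηy : κ₀ ≤ η y := hηκ y
  have hηy0 : 0 < η y := lt_of_lt_of_le hκ₀ hηy
  have htη : 0 < t * η y := mul_pos ht0 hηy0
  have htκ : 0 < t * κ₀ := mul_pos ht0 hκ₀
  have htκη : t * κ₀ ≤ t * η y := mul_le_mul_of_nonneg_left hηy ht0.le
  -- the slope variables
  have hm1 : R * t / κ₀ ≤ 1 := by
    rw [div_le_one hκ₀]
    calc R * t ≤ R * δ := mul_le_mul_of_nonneg_left htδ hR.le
      _ ≤ κ₀ := by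
        rw [le_div_iff₀ hR] at hδκ
        linarith [hδκ]
  have hm0 : 0 ≤ R * t / κ₀ := by positivity
  have hbound : ∀ w : Euc d → ℝ, (∀ z, |w z| ≤ R * t ^ 2) →
      |w y / (t * η y)| ≤ R * t / κ₀ := by
    intro w hw
    rw [abs_div, abs_of_pos htη]
    calc |w y| / (t * η y) ≤ (R * t^2) / (t * κ₀) :=
        div_le_div₀ (by positivity) (hw y) htκ htκη
      _ = R * t / κ₀ := by field_simp
  have hsu := hbound u hubd
  have hsv := hbound v hvbd
  have hdiff : |u y / (t * η y) - v y / (t * η y)| ≤ c / (t * κ₀) := by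
    rw [div_sub_div_same, abs_div, abs_of_pos htη]
    exact div_le_div₀ hc0 (hc y) htκ htκη
  have hS := tsum_pow_diff_le (fun k => rbinom (1/(p-1)+1) (k+2)) hT hm1 hsu hsv
  set su : ℝ := u y / (t * η y)
  set sv : ℝ := v y / (t * η y)
  have h1 : |(∑' k : ℕ, rbinom (1/(p-1)+1) (k+2) * su ^ (k+2))
      - ∑' k : ℕ, rbinom (1/(p-1)+1) (k+2) * sv ^ (k+2)| ≤ T * (R * c / κ₀^2) := by
    refine hS.trans ?_
    have step : (R * t / κ₀) * |su - sv| ≤ (R * t / κ₀) * (c / (t * κ₀)) :=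
      mul_le_mul_of_nonneg_left hdiff hm0
    have heq : (R * t / κ₀) * (c / (t * κ₀)) = R * c / κ₀^2 := by
      field_simp
    calc T * ((R * t / κ₀) * |su - sv|) ≤ T * ((R * t / κ₀) * (c / (t * κ₀))) :=
        mul_le_mul_of_nonneg_left step hT0
      _ = T * (R * c / κ₀^2) := by rw [heq]
  -- the θ-term
  have hA : (0:ℝ) ≤ t ^ p * γ y := by
    have := Real.rpow_pos_of_pos ht0 p
    have := hγ0 y
    positivity
  have hqB : (p-1) * (1/(p-1)) = 1 := mul_one_div_cancel (by linarith)
  have h2 := glip hβ hp1 hqB hA (t * η y + u y) (t * η y + v y)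
  have hxuv : (t * η y + u y) - (t * η y + v y) = u y - v y := by ring
  rw [hxuv] at h2
  have h2' : |t ^ p * γ y * (t * η y + u y) /
        ((t ^ p * γ y) ^ (1/(p-1)) + |t * η y + u y| ^ (1/(p-1))) ^ (p-1)
      - t ^ p * γ y * (t * η y + v y) /
        ((t ^ p * γ y) ^ (1/(p-1)) + |t * η y + v y| ^ (1/(p-1))) ^ (p-1)| ≤ c :=
    h2.trans (hc y)
  have h3 : |(t * η y + u y) - (t * η y + v y)| ≤ c := by rw [hxuv]; exact hc y
  -- decomposition
  have hW0 : 0 ≤ η y / (1/(p-1)) := by positivity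
  have hWle : η y / (1/(p-1)) ≤ Cη * (p-1) := by
    have hrw : η y / (1/(p-1)) = η y * (p-1) := by
      field_simp
    rw [hrw]
    exact mul_le_mul_of_nonneg_right ((le_abs_self _).trans (hCη y)) hp1.le
  set Gu : ℝ := t ^ p * γ y * (t * η y + u y) /
      ((t ^ p * γ y) ^ (1/(p-1)) + |t * η y + u y| ^ (1/(p-1))) ^ (p-1)
  set Gv : ℝ := t ^ p * γ y * (t * η y + v y) /
      ((t ^ p * γ y) ^ (1/(p-1)) + |t * η y + v y| ^ (1/(p-1))) ^ (p-1)
  set Su : ℝ := ∑' k : ℕ, rbinom (1/(p-1)+1) (k+2) * su ^ (k+2)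
  set Sv : ℝ := ∑' k : ℕ, rbinom (1/(p-1)+1) (k+2) * sv ^ (k+2)
  have hEq : fNL p θ η γ lam a t u y - fNL p θ η γ lam a t v y
      = -((η y / (1/(p-1))) * (Su - Sv))
        + θ * ((Gu - Gv) - ((t * η y + u y) - (t * η y + v y))) := by
    simp only [fNL]
    ring
  rw [hEq]
  calc |-((η y / (1/(p-1))) * (Su - Sv))
        + θ * ((Gu - Gv) - ((t * η y + u y) - (t * η y + v y)))|
      ≤ |(η y / (1/(p-1))) * (Su - Sv)|
        + |θ * ((Gu - Gv) - ((t * η y + u y) - (t * η y + v y)))| := by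
        exact (abs_add_le _ _).trans (by rw [abs_neg])
    _ = (η y / (1/(p-1))) * |Su - Sv|
        + θ * |(Gu - Gv) - ((t * η y + u y) - (t * η y + v y))| := by
        rw [abs_mul, abs_mul, abs_of_nonneg hW0, abs_of_nonneg hθ]
    _ ≤ (Cη * (p-1)) * (T * (R * c / κ₀^2)) + θ * (c + c) := by
        refine add_le_add (mul_le_mul hWle h1 (abs_nonneg _) (by positivity)) ?_
        refine mul_le_mul_of_nonneg_left ?_ hθ
        exact (abs_sub _ _).trans (add_le_add h2' h3)
    _ ≤ (Cη * (p-1) * T * R / κ₀^2 + 2*θ + 1) * c := by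
        have : (Cη * (p-1)) * (T * (R * c / κ₀^2)) = (Cη * (p-1) * T * R / κ₀^2) * c := by
          ring
        rw [this]
        nlinarith [hc0]
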